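/- The value inf E[φ(Y, U, V, W'')], where the infimum is over all random variables U : Ω → 𝕌 with σ(U) ⊆ σ(W') and all integrable random variables V : Ω → ℝ^m with σ(V) ⊆ σ(W', W'') and E[V | σ(W')] = 0 almost surely, equals E[ψ(Y)]. -/

import Mathlib

open MeasureTheory ProbabilityTheory
open scoped ENNReal

set_option linter.unusedSectionVars false
set_option linter.unusedTactic false

section MEqSection
variable {α β : Type*}

/-- Two points are measurably equivalent if no measurable set separates them. -/
def MEq [MeasurableSpace α] (a b : α) : Prop :=
  ∀ s : Set α, MeasurableSet s → (a ∈ s ↔ b ∈ s)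

variable [MeasurableSpace α] [MeasurableSpace β]

lemma MEq.rfl {a : α} : MEq a a := fun _ _ => Iff.rfl

lemma MEq.symm {a b : α} (h : MEq a b) : MEq b a := fun s hs => (h s hs).symm

lemma MEq.trans {a b c : α} (h : MEq a b) (h' : MEq b c) : MEq a c :=
  fun s hs => (h s hs).trans (h' s hs)

lemma MEq.eq_of_measurable [MeasurableSingletonClass β] {a b : α} (h : MEq a b) {f : α → β}
    (hf : Measurable f) : f a = f b := by
  have := (h (f ⁻¹' {f a}) (hf (measurableSet_singleton (f a)))).mp
    (Set.mem_preimage.mpr (Set.mem_singleton _))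
  exact (Set.mem_singleton_iff.mp this).symm

lemma MEq.prod {a a' : α} {b b' : β} (ha : MEq a a') (hb : MEq b b') :
    MEq (a, b) (a', b') := by
  intro s hs
  let M : MeasurableSpace (α × β) :=
    { MeasurableSet' := fun t => ((a, b) ∈ t ↔ (a', b') ∈ t)
      measurableSet_empty := Iff.rfl
      measurableSet_compl := fun t ht => not_congr ht
      measurableSet_iUnion := fun f hf => by
        simp only [Set.mem_iUnion]
        exact exists_congr hf }
  have hle : (Prod.instMeasurableSpace : MeasurableSpace (α × β)) ≤ M := by
    refine sup_le ?_ ?_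
    · rintro t ⟨u, hu, rfl⟩
      exact ha u hu
    · rintro t ⟨u, hu, rfl⟩
      exact hb u hu
  exact hle s hs

lemma MEq.eq [MeasurableSingletonClass α] {a b : α} (h : MEq a b) : a = b :=
  h.eq_of_measurable measurable_id

lemma MEq.of_comap_le {Ω' : Type*} [MeasurableSpace Ω'] {f : Ω' → β} {T : Ω' → α}
    (hf : MeasurableSpace.comap f inferInstance ≤ MeasurableSpace.comap T inferInstance)
    {ω τ : Ω'} (h : MEq (T ω) (T τ)) : MEq (f ω) (f τ) := by
  intro s hs
  obtain ⟨C, hC, hCe⟩ := hf (f ⁻¹' s) ⟨s, hs, Eq.refl _⟩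
  show ω ∈ f ⁻¹' s ↔ τ ∈ f ⁻¹' s
  rw [← hCe]
  exact h C hC

end MEqSection

section Atoms
variable {Ω 𝕋 : Type*} [MeasurableSpace Ω] [MeasurableSpace 𝕋]

/-- The atom of `ω` for the σ-algebra generated by `T`. -/
def atomOf (T : Ω → 𝕋) (ω : Ω) : Set Ω := {τ | MEq (T τ) (T ω)}

lemma mem_atomOf {T : Ω → 𝕋} {ω τ : Ω} : τ ∈ atomOf T ω ↔ MEq (T τ) (T ω) := Iff.rfl

lemma self_mem_atomOf (T : Ω → 𝕋) (ω : Ω) : ω ∈ atomOf T ω := MEq.rfl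

lemma atomOf_eq_of_mem {T : Ω → 𝕋} {ω τ : Ω} (h : τ ∈ atomOf T ω) :
    atomOf T τ = atomOf T ω := by
  ext σ
  exact ⟨fun hs => hs.trans h, fun hs => hs.trans (MEq.symm h)⟩

lemma atomOf_eq_preimage {T : Ω → 𝕋} (hfin : (Set.range T).Finite) (ω : Ω) :
    ∃ C : Set 𝕋, MeasurableSet C ∧ atomOf T ω = T ⁻¹' C := by
  classical
  have hsep : ∀ w : 𝕋, ¬ MEq w (T ω) → ∃ B : Set 𝕋, MeasurableSet B ∧ T ω ∈ B ∧ w ∉ B := by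
    intro w hw
    simp only [MEq, not_forall] at hw
    obtain ⟨B, hB, hiff⟩ := hw
    by_cases h1 : T ω ∈ B
    · exact ⟨B, hB, h1, fun h2 => hiff ⟨fun _ => h1, fun _ => h2⟩⟩
    · exact ⟨Bᶜ, hB.compl, h1, fun h2 => hiff ⟨fun h => absurd h h2, fun h => absurd h h1⟩⟩
  choose B hBm hBω hBw using hsep
  refine ⟨⋂ (w ∈ hfin.toFinset) (h : ¬ MEq w (T ω)), B w h, ?_, ?_⟩
  · refine Set.Finite.measurableSet_biInter hfin.toFinset.finite_toSet fun w _ => ?_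
    exact MeasurableSet.iInter fun h => hBm w h
  · ext τ
    simp only [Set.mem_preimage, Set.mem_iInter]
    constructor
    · intro h w _ hnw
      exact (h (B w hnw) (hBm w hnw)).mpr (hBω w hnw)
    · intro h
      by_contra hne
      exact hBw (T τ) hne (h (T τ) (hfin.mem_toFinset.mpr (Set.mem_range_self τ)) hne)

lemma atomOf_measurableSet_comap {T : Ω → 𝕋} (hfin : (Set.range T).Finite) (ω : Ω) :
    MeasurableSet[MeasurableSpace.comap T inferInstance] (atomOf T ω) := by
  obtain ⟨C, hC, hCe⟩ := atomOf_eq_preimage hfin ω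
  exact ⟨C, hC, hCe.symm⟩

lemma atomOf_measurableSet {T : Ω → 𝕋} (hT : Measurable T) (hfin : (Set.range T).Finite)
    (ω : Ω) : MeasurableSet (atomOf T ω) := by
  obtain ⟨C, hC, hCe⟩ := atomOf_eq_preimage hfin ω
  rw [hCe]; exact hT hC

lemma finite_range_atomOf {T : Ω → 𝕋} (hfin : (Set.range T).Finite) :
    (Set.range (atomOf T)).Finite := by
  have hsub : Set.range (atomOf T) ⊆ (fun w => T ⁻¹' {v | MEq v w}) '' (Set.range T) := by
    rintro _ ⟨ω, rfl⟩
    exact ⟨T ω, Set.mem_range_self _, rfl⟩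
  exact (hfin.image _).subset hsub

lemma atomOf_disjoint {T : Ω → 𝕋} {ω ω' : Ω} (h : atomOf T ω ≠ atomOf T ω') :
    Disjoint (atomOf T ω) (atomOf T ω') :=
  Set.disjoint_left.mpr fun τ h1 h2 => h (by rw [← atomOf_eq_of_mem h1, atomOf_eq_of_mem h2])

lemma iUnion_atomOf (T : Ω → 𝕋) : ⋃ s ∈ Set.range (atomOf T), s = Set.univ := by
  ext ω
  simp only [Set.mem_iUnion, Set.mem_univ, iff_true]
  exact ⟨atomOf T ω, Set.mem_range_self ω, self_mem_atomOf T ω⟩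

end Atoms

section IndepTools
variable {Ω β γ β' γ' : Type*} [MeasurableSpace Ω] [MeasurableSpace β] [MeasurableSpace γ]
  [MeasurableSpace β'] [MeasurableSpace γ'] {μ : Measure Ω}

lemma indepFun_of_comap_le {W : Ω → β} {W₂ : Ω → γ} {X : Ω → β'} {Z : Ω → γ'}
    (h : IndepFun W W₂ μ)
    (hX : MeasurableSpace.comap X inferInstance ≤ MeasurableSpace.comap W inferInstance)
    (hZ : MeasurableSpace.comap Z inferInstance ≤ MeasurableSpace.comap W₂ inferInstance) :
    IndepFun X Z μ := by
  rw [IndepFun_iff] at h ⊢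
  exact fun t1 t2 h1 h2 => h t1 t2 (hX _ h1) (hZ _ h2)

lemma comap_indicator_le {M : MeasurableSpace Ω} {E : Type*} [MeasurableSpace E] [Zero E]
    (c : E) {A : Set Ω} (hA : MeasurableSet[M] A) :
    MeasurableSpace.comap (A.indicator (fun _ => c)) inferInstance ≤ M := by
  classical
  rintro _ ⟨u, hu, rfl⟩
  have : (A.indicator (fun _ => c)) ⁻¹' u =
      (if c ∈ u then A else ∅) ∪ (if (0 : E) ∈ u then Aᶜ else ∅) := by
    ext ω
    by_cases hω : ω ∈ A <;>
      simp [Set.indicator_of_mem, Set.indicator_of_notMem, hω] <;>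
      split_ifs with h <;> simp [h, hω]
  rw [this]
  refine MeasurableSet.union ?_ ?_ <;> split_ifs
  · exact hA
  · exact MeasurableSet.empty
  · exact hA.compl
  · exact MeasurableSet.empty

/-- Key independence fact for lintegrals: if `A` is `σ(W)`-measurable and `Z` is
`σ(W₂)`-measurable, with `W, W₂` independent, then `∫⁻_A Z = μ A * ∫⁻ Z`. -/
lemma lintegral_restrict_indep {W : Ω → β} {W₂ : Ω → γ} (hW : Measurable W)
    (hW₂ : Measurable W₂) (h : IndepFun W W₂ μ) {A : Set Ω}
    (hA : MeasurableSet[MeasurableSpace.comap W inferInstance] A) {Z : Ω → ℝ≥0∞}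
    (hZ : MeasurableSpace.comap Z inferInstance ≤ MeasurableSpace.comap W₂ inferInstance) :
    ∫⁻ ω in A, Z ω ∂μ = μ A * ∫⁻ ω, Z ω ∂μ := by
  have hA' : MeasurableSet A := hW.comap_le _ hA
  have hZm : Measurable Z := measurable_iff_comap_le.mpr (hZ.trans hW₂.comap_le)
  have hind : IndepFun (A.indicator (fun _ => (1 : ℝ≥0∞))) Z μ :=
    indepFun_of_comap_le h (comap_indicator_le _ hA) hZ
  have hmul := lintegral_mul_eq_lintegral_mul_lintegral_of_indepFun
    (measurable_const.indicator hA') hZm hind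
  have h1 : (A.indicator (fun _ => (1 : ℝ≥0∞)) * Z) = A.indicator Z := by
    ext ω
    by_cases hω : ω ∈ A <;> simp [hω]
  rw [h1, lintegral_indicator hA'] at hmul
  have h2 : ∫⁻ ω, A.indicator (fun _ => (1 : ℝ≥0∞)) ω ∂μ = μ A := by
    exact lintegral_indicator_one hA'
  rw [hmul, h2]

lemma integral_apply_pi {m : ℕ} {f : Ω → Fin m → ℝ} (hf : Integrable f μ) (j : Fin m) :
    (∫ ω, f ω ∂μ) j = ∫ ω, f ω j ∂μ :=
  ((ContinuousLinearMap.proj (R := ℝ) (φ := fun _ : Fin m => ℝ) j).integral_comp_comm hf).symm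

lemma integral_restrict_indep_real {W : Ω → β} {W₂ : Ω → γ} [IsFiniteMeasure μ]
    (hW : Measurable W) (hW₂ : Measurable W₂) (h : IndepFun W W₂ μ) {A : Set Ω}
    (hA : MeasurableSet[MeasurableSpace.comap W inferInstance] A) {X : Ω → ℝ}
    (hX : MeasurableSpace.comap X inferInstance ≤ MeasurableSpace.comap W₂ inferInstance) :
    ∫ ω in A, X ω ∂μ = (μ A).toReal * ∫ ω, X ω ∂μ := by
  have hA' : MeasurableSet A := hW.comap_le _ hA
  have hXm : Measurable X := measurable_iff_comap_le.mpr (hX.trans hW₂.comap_le)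
  have hind : IndepFun (A.indicator (fun _ => (1 : ℝ))) X μ :=
    indepFun_of_comap_le h (comap_indicator_le _ hA) hX
  have hmul := hind.integral_mul_eq_mul_integral
    (measurable_const.indicator hA').aestronglyMeasurable hXm.aestronglyMeasurable
  have h1 : (A.indicator (fun _ => (1 : ℝ)) * X) = A.indicator X := by
    ext ω
    by_cases hω : ω ∈ A <;> simp [hω]
  rw [h1, integral_indicator hA'] at hmul
  have h2 : ∫ ω, A.indicator (fun _ => (1 : ℝ)) ω ∂μ = (μ A).toReal := by
    rw [integral_indicator_const (1 : ℝ) hA', smul_eq_mul, mul_one]; rfl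
  rw [hmul, h2]

lemma integral_restrict_indep_pi {m : ℕ} {W : Ω → β} {W₂ : Ω → γ} [IsFiniteMeasure μ]
    (hW : Measurable W) (hW₂ : Measurable W₂) (h : IndepFun W W₂ μ) {A : Set Ω}
    (hA : MeasurableSet[MeasurableSpace.comap W inferInstance] A) {X : Ω → Fin m → ℝ}
    (hX : MeasurableSpace.comap X inferInstance ≤ MeasurableSpace.comap W₂ inferInstance)
    (hXi : Integrable X μ) :
    ∫ ω in A, X ω ∂μ = (μ A).toReal • ∫ ω, X ω ∂μ := by
  have hA' : MeasurableSet A := hW.comap_le _ hA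
  have hXm : Measurable X := measurable_iff_comap_le.mpr (hX.trans hW₂.comap_le)
  funext j
  rw [integral_apply_pi (hXi.restrict (s := A)) j, Pi.smul_apply,
    integral_apply_pi hXi j, smul_eq_mul]
  have hXj : MeasurableSpace.comap (fun ω => X ω j) inferInstance ≤
      MeasurableSpace.comap W₂ inferInstance := by
    refine le_trans ?_ hX
    rintro _ ⟨u, hu, rfl⟩
    exact ⟨(fun v : Fin m → ℝ => v j) ⁻¹' u, (measurable_pi_apply j) hu, rfl⟩
  exact integral_restrict_indep_real hW hW₂ h hA hXj

end IndepTools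

section Pasting
variable {Ω 𝕋 𝕋₂ E : Type*} [MeasurableSpace Ω] [MeasurableSpace 𝕋] [MeasurableSpace 𝕋₂]
  [MeasurableSpace E]

open Classical in
/-- A choice of a measurable set representing a `σ(T)`-measurable set as a preimage. -/
noncomputable def preRep (T : Ω → 𝕋) (s : Set Ω) : Set 𝕋 :=
  if h : ∃ C, MeasurableSet C ∧ s = T ⁻¹' C then h.choose else ∅

lemma preRep_spec {T : Ω → 𝕋} (hfin : (Set.range T).Finite) (ω : Ω) :
    MeasurableSet (preRep T (atomOf T ω)) ∧ atomOf T ω = T ⁻¹' (preRep T (atomOf T ω)) := by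
  rw [preRep, dif_pos (atomOf_eq_preimage hfin ω)]
  exact (atomOf_eq_preimage hfin ω).choose_spec

lemma mem_atom_resolve {T : Ω → 𝕋} (hfin : (Set.range T).Finite) {s : Set Ω}
    (hs : s ∈ Set.range (atomOf T)) {ω : Ω} (hω : T ω ∈ preRep T s) : atomOf T ω = s := by
  obtain ⟨τ, rfl⟩ := hs
  exact atomOf_eq_of_mem (by rw [(preRep_spec hfin τ).2]; exact hω)

/-- A function of the atom of `ω` is `σ(T)`-measurable. -/
lemma comap_comp_atomOf_le {T : Ω → 𝕋} (hfin : (Set.range T).Finite) (g : Set Ω → E) :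
    MeasurableSpace.comap (fun ω => g (atomOf T ω)) inferInstance ≤
      MeasurableSpace.comap T inferInstance := by
  classical
  rintro _ ⟨B, hB, rfl⟩
  set P := (finite_range_atomOf hfin).toFinset with hP
  have hmem : ∀ x : {s // s ∈ P}, x.1 ∈ Set.range (atomOf T) :=
    fun x => (Set.Finite.mem_toFinset _).mp x.2
  refine ⟨⋃ (x : {s // s ∈ P}), if g x.1 ∈ B then preRep T x.1 else ∅, ?_, ?_⟩
  · refine MeasurableSet.iUnion fun x => ?_
    split_ifs
    · obtain ⟨ω, hω⟩ := hmem x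
      rw [← hω]
      exact (preRep_spec hfin ω).1
    · exact MeasurableSet.empty
  · ext ω
    simp only [Set.mem_preimage, Set.mem_iUnion]
    constructor
    · rintro ⟨x, hx⟩
      by_cases hgx : g x.1 ∈ B
      · rw [if_pos hgx] at hx
        rw [mem_atom_resolve hfin (hmem x) hx]
        exact hgx
      · rw [if_neg hgx] at hx
        exact absurd hx (Set.notMem_empty _)
    · intro hω
      refine ⟨⟨atomOf T ω, (Set.Finite.mem_toFinset _).mpr (Set.mem_range_self ω)⟩, ?_⟩
      rw [if_pos hω]
      have hself := self_mem_atomOf T ω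
      rw [(preRep_spec hfin ω).2] at hself
      exact hself

/-- Pasting functions over the atoms of `T₁`, each of which is `σ(T₂)`-measurable,
yields a `σ(T₁, T₂)`-measurable function. -/
lemma comap_paste_le {T₁ : Ω → 𝕋} {T₂ : Ω → 𝕋₂} (hfin : (Set.range T₁).Finite)
    (F : Set Ω → Ω → E)
    (hF : ∀ s ∈ Set.range (atomOf T₁), MeasurableSpace.comap (F s) inferInstance ≤
      MeasurableSpace.comap T₂ inferInstance) :
    MeasurableSpace.comap (fun ω => F (atomOf T₁ ω) ω) inferInstance ≤
      MeasurableSpace.comap (fun ω => (T₁ ω, T₂ ω)) inferInstance := by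
  classical
  rintro _ ⟨B, hB, rfl⟩
  set P := (finite_range_atomOf hfin).toFinset with hP
  have hmem : ∀ x : {s // s ∈ P}, x.1 ∈ Set.range (atomOf T₁) :=
    fun x => (Set.Finite.mem_toFinset _).mp x.2
  have hD : ∀ x : {s // s ∈ P}, ∃ D : Set 𝕋₂, MeasurableSet D ∧ T₂ ⁻¹' D = F x.1 ⁻¹' B :=
    fun x => hF x.1 (hmem x) _ ⟨B, hB, rfl⟩
  choose D hDm hDe using hD
  refine ⟨⋃ (x : {s // s ∈ P}), (preRep T₁ x.1) ×ˢ (D x), ?_, ?_⟩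
  · refine MeasurableSet.iUnion fun x => ?_
    obtain ⟨ω, hω⟩ := hmem x
    refine MeasurableSet.prod ?_ (hDm x)
    rw [← hω]
    exact (preRep_spec hfin ω).1
  · ext ω
    simp only [Set.mem_preimage, Set.mem_iUnion, Set.mem_prod]
    constructor
    · rintro ⟨x, hx1, hx2⟩
      have h1 : atomOf T₁ ω = x.1 := mem_atom_resolve hfin (hmem x) hx1
      have h2 : ω ∈ F x.1 ⁻¹' B := by rw [← hDe x]; exact hx2
      rw [h1]
      exact h2
    · intro hω
      refine ⟨⟨atomOf T₁ ω, (Set.Finite.mem_toFinset _).mpr (Set.mem_range_self ω)⟩, ?_, ?_⟩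
      · have hself := self_mem_atomOf T₁ ω
        rw [(preRep_spec hfin ω).2] at hself
        exact hself
      · show T₂ ω ∈ D _
        rw [← Set.mem_preimage, hDe]
        exact hω

end Pasting

section FinRange
variable {Ω : Type*} [MeasurableSpace Ω] {μ : MeasureTheory.Measure Ω}
  [MeasureTheory.IsFiniteMeasure μ] {m : ℕ}

lemma integrable_of_finite_range {f : Ω → Fin m → ℝ} (hf : Measurable f)
    (hfin : (Set.range f).Finite) : MeasureTheory.Integrable f μ := by
  obtain ⟨C, hC⟩ := (hfin.image (fun v => ‖v‖)).bddAbove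
  refine ⟨hf.aestronglyMeasurable, MeasureTheory.HasFiniteIntegral.of_bounded
    (C := C) (Filter.Eventually.of_forall fun ω => ?_)⟩
  exact hC ⟨f ω, Set.mem_range_self ω, rfl⟩

end FinRange


set_option maxHeartbeats 1000000 in
/-- **Interchange lemma.**
The optimal value of the minimization of `E[φ(Y, U, V, W'')]` over random variables `U`
with `σ(U) ⊆ σ(W')` and integrable `V` with `σ(V) ⊆ σ(W', W'')` and `E[V | σ(W')] = 0`
a.s. equals `E[ψ(Y)]`, where `ψ(y)` is the value of the corresponding "pointwise"
problem. -/
theorem interchange_lemma {Ω : Type*} [MeasurableSpace Ω]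
    (μ : Measure Ω) [IsProbabilityMeasure μ] {m : ℕ} (hm : 1 ≤ m)
    {𝕐 𝕌 𝕎' 𝕎'' : Type*} [MeasurableSpace 𝕐] [MeasurableSpace 𝕌]
    [MeasurableSpace 𝕎'] [MeasurableSpace 𝕎'']
    (φ : 𝕐 × 𝕌 × (Fin m → ℝ) × 𝕎'' → ℝ≥0∞) (hφ : Measurable φ)
    (W' : Ω → 𝕎') (W'' : Ω → 𝕎'')
    (hW' : Measurable W') (hW'' : Measurable W'')
    (hindep : IndepFun W' W'' μ)
    (hfin' : (Set.range W').Finite) (hfin'' : (Set.range W'').Finite)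
    (Y : Ω → 𝕐)
    (hY : MeasurableSpace.comap Y inferInstance ≤ MeasurableSpace.comap W' inferInstance)
    (ψ : 𝕐 → ℝ≥0∞)
    (hψ : ∀ y, ψ y =
      ⨅ (u : 𝕌) (V : Ω → Fin m → ℝ)
        (_ : MeasurableSpace.comap V inferInstance ≤ MeasurableSpace.comap W'' inferInstance)
        (_ : Integrable V μ) (_ : ∫ ω, V ω ∂μ = 0),
        ∫⁻ ω, φ (y, u, V ω, W'' ω) ∂μ) :
    (⨅ (U : Ω → 𝕌) (V : Ω → Fin m → ℝ)
      (_ : MeasurableSpace.comap U inferInstance ≤ MeasurableSpace.comap W' inferInstance)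
      (_ : MeasurableSpace.comap V inferInstance ≤
            MeasurableSpace.comap (fun ω => (W' ω, W'' ω)) inferInstance)
      (_ : Integrable V μ)
      (_ : μ[V | MeasurableSpace.comap W' inferInstance] =ᵐ[μ] 0),
      ∫⁻ ω, φ (Y ω, U ω, V ω, W'' ω) ∂μ)
    = ∫⁻ ω, ψ (Y ω) ∂μ := by
  classical
  have hm'le : MeasurableSpace.comap W' inferInstance ≤ (inferInstance : MeasurableSpace Ω) :=
    hW'.comap_le
  haveI hsf : SigmaFinite (μ.trim hm'le) := inferInstance
  have hΩ : Nonempty Ω := by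
    by_contra h
    rw [not_nonempty_iff] at h
    have h1 := measure_univ (μ := μ)
    rw [Set.univ_eq_empty_iff.mpr h, measure_empty] at h1
    exact zero_ne_one h1
  -- the finite partition of `Ω` into atoms of `σ(W')`
  set P : Finset (Set Ω) := (finite_range_atomOf hfin').toFinset with hPdef
  have hPmem : ∀ ω : Ω, atomOf W' ω ∈ P := fun ω => (Set.Finite.mem_toFinset _).mpr ⟨ω, rfl⟩
  have hPrange : ∀ s ∈ P, s ∈ Set.range (atomOf W') := fun s hs => (Set.Finite.mem_toFinset _).mp hs
  -- representatives
  set R : Set Ω → Ω := fun s => if h : ∃ τ, atomOf W' τ = s then h.choose else hΩ.some with hRdef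
  have hR : ∀ s ∈ P, atomOf W' (R s) = s := by
    intro s hs
    have hex : ∃ τ, atomOf W' τ = s := hPrange s hs
    simp only [hRdef, dif_pos hex]
    exact hex.choose_spec
  have hMEqat : ∀ s ∈ P, ∀ ω ∈ s, MEq (W' ω) (W' (R s)) := by
    intro s hs ω hω
    rw [← hR s hs] at hω
    exact mem_atomOf.mp hω
  have hatomeq : ∀ s ∈ P, ∀ ω ∈ s, atomOf W' ω = s := by
    intro s hs ω hω
    rw [← hR s hs] at hω ⊢
    exact atomOf_eq_of_mem hω
  have hsm' : ∀ s ∈ P, MeasurableSet[MeasurableSpace.comap W' inferInstance] s := by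
    intro s hs
    obtain ⟨τ, rfl⟩ := hPrange s hs
    exact atomOf_measurableSet_comap hfin' τ
  have hsm : ∀ s ∈ P, MeasurableSet s := fun s hs => hm'le _ (hsm' s hs)
  have hdisj : Set.PairwiseDisjoint (↑P : Set (Set Ω)) id := by
    intro s hs t ht hst
    obtain ⟨σ₁, rfl⟩ := hPrange s hs
    obtain ⟨σ₂, rfl⟩ := hPrange t ht
    exact atomOf_disjoint hst
  have hcover : ⋃ s ∈ P, s = Set.univ := by
    ext ω
    simp only [Set.mem_iUnion, Set.mem_univ, iff_true]
    exact ⟨atomOf W' ω, hPmem ω, self_mem_atomOf W' ω⟩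
  have hdecomp : ∀ f : Ω → ℝ≥0∞, ∫⁻ ω, f ω ∂μ = ∑ s ∈ P, ∫⁻ ω in s, f ω ∂μ := by
    intro f
    have h1 := lintegral_biUnion_finset (μ := μ) hdisj (fun s hs => hsm s hs) f
    rw [show ⋃ s ∈ P, id s = Set.univ from hcover, Measure.restrict_univ] at h1
    exact h1
  have hsum : ∑ s ∈ P, μ s = 1 := by
    have h1 := measure_biUnion_finset (μ := μ) hdisj (fun s hs => hsm s hs)
    rw [show ⋃ s ∈ P, id s = Set.univ from hcover, measure_univ] at h1
    exact h1.symm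
  -- invariance of ψ and φ under measurable equivalence
  have hψMEq : ∀ y y' : 𝕐, MEq y y' → ψ y = ψ y' := by
    intro y y' hyy
    rw [hψ y, hψ y']
    refine iInf_congr fun u => iInf_congr fun V => iInf_congr fun _ => iInf_congr fun _ =>
      iInf_congr fun _ => lintegral_congr fun ω => ?_
    exact (hyy.prod MEq.rfl).eq_of_measurable hφ
  have hψint : ∀ s ∈ P, ∫⁻ ω in s, ψ (Y ω) ∂μ = μ s * ψ (Y (R s)) := by
    intro s hs
    have hconst : ∀ᵐ ω ∂μ, ω ∈ s → ψ (Y ω) = ψ (Y (R s)) :=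
      Filter.Eventually.of_forall fun ω hω =>
        hψMEq _ _ (MEq.of_comap_le hY (hMEqat s hs ω hω))
    rw [setLIntegral_congr_fun_ae (hsm s hs) hconst, setLIntegral_const, mul_comm]
  refine le_antisymm ?_ ?_
  · -- iInf ≤ ∫⁻ ψ ∘ Y : construct near-optimal pasted candidates
    refine ENNReal.le_of_forall_pos_le_add fun ε hε hlt => ?_
    have hψfin : ∀ s ∈ P, μ s ≠ 0 → ψ (Y (R s)) ≠ ⊤ := by
      intro s hs hμs htop
      have h1 : μ s * ψ (Y (R s)) ≤ ∫⁻ ω, ψ (Y ω) ∂μ := by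
        rw [← hψint s hs]
        exact lintegral_mono' Measure.restrict_le_self le_rfl
      rw [htop, ENNReal.mul_top hμs, top_le_iff] at h1
      rw [h1] at hlt
      exact hlt.false
    have hU𝕌 : Nonempty 𝕌 := by
      have hex : ∃ s ∈ P, μ s ≠ 0 := by
        by_contra hall
        push_neg at hall
        rw [Finset.sum_eq_zero hall] at hsum
        exact zero_ne_one hsum
      obtain ⟨s, hs, hμs⟩ := hex
      have hne := hψfin s hs hμs
      rw [hψ (Y (R s))] at hne
      by_contra hU
      rw [not_nonempty_iff] at hU
      exact hne (iInf_of_empty _)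
    have hchoice : ∀ ω : Ω, ∃ (u : 𝕌) (Vf : Ω → Fin m → ℝ),
        (MeasurableSpace.comap Vf inferInstance ≤ MeasurableSpace.comap W'' inferInstance) ∧
        Integrable Vf μ ∧ (∫ τ, Vf τ ∂μ) = 0 ∧
        (ψ (Y ω) ≠ ⊤ → ∫⁻ τ, φ (Y ω, u, Vf τ, W'' τ) ∂μ ≤ ψ (Y ω) + ε) := by
      intro ω
      by_cases htop : ψ (Y ω) = ⊤
      · refine ⟨hU𝕌.some, 0, ?_, integrable_zero _ _ _, integral_zero _ _,
          fun h => absurd htop h⟩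
        rintro _ ⟨u, hu, rfl⟩
        by_cases h0 : (0 : Fin m → ℝ) ∈ u
        · exact ⟨Set.univ, MeasurableSet.univ, by ext ω'; simp [h0]⟩
        · exact ⟨∅, MeasurableSet.empty, by ext ω'; simp [h0]⟩
      · have hlt' : (⨅ (u : 𝕌) (V : Ω → Fin m → ℝ)
            (_ : MeasurableSpace.comap V inferInstance ≤
              MeasurableSpace.comap W'' inferInstance)
            (_ : Integrable V μ) (_ : ∫ ω', V ω' ∂μ = 0),
            ∫⁻ ω', φ (Y ω, u, V ω', W'' ω') ∂μ) < ψ (Y ω) + ε := by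
          rw [← hψ (Y ω)]
          exact ENNReal.lt_add_right htop (by exact_mod_cast hε.ne')
        simp only [iInf_lt_iff] at hlt'
        obtain ⟨u, Vf, h1, h2, h3, h4⟩ := hlt'
        exact ⟨u, Vf, h1, h2, h3, fun _ => h4.le⟩
    choose uch Vch hVchc hVchi hVch0 hVchφ using hchoice
    set U : Ω → 𝕌 := fun ω => uch (R (atomOf W' ω)) with hUdef
    set Vg : Ω → Fin m → ℝ := fun ω => Vch (R (atomOf W' ω)) ω with hVgdef
    have hUc : MeasurableSpace.comap U inferInstance ≤
        MeasurableSpace.comap W' inferInstance :=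
      comap_comp_atomOf_le hfin' (fun s => uch (R s))
    have hVgc : MeasurableSpace.comap Vg inferInstance ≤
        MeasurableSpace.comap (fun ω => (W' ω, W'' ω)) inferInstance :=
      comap_paste_le hfin' (fun s ω => Vch (R s) ω) (fun s _ => hVchc (R s))
    have hVg_eq : ∀ ω, Vg ω = ∑ s ∈ P, Set.indicator s (fun τ => Vch (R s) τ) ω := by
      intro ω
      rw [Finset.sum_eq_single_of_mem (atomOf W' ω) (hPmem ω)]
      · exact (Set.indicator_of_mem (self_mem_atomOf W' ω) _).symm
      · intro t ht hne
        exact Set.indicator_of_notMem (fun hmem => hne (hatomeq t ht ω hmem).symm) _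
    have hVgi : Integrable Vg μ := by
      have h1 : Integrable (fun ω => ∑ s ∈ P, Set.indicator s (fun τ => Vch (R s) τ) ω) μ :=
        integrable_finset_sum _ (fun s hs => (hVchi (R s)).indicator (hsm s hs))
      exact h1.congr (Filter.Eventually.of_forall fun ω => (hVg_eq ω).symm)
    have hVgce : μ[Vg | MeasurableSpace.comap W' inferInstance] =ᵐ[μ] 0 := by
      refine (ae_eq_condExp_of_forall_setIntegral_eq hm'le hVgi
        (fun t _ _ => (integrable_zero _ _ _).integrableOn)
        (fun t ht _ => ?_)
        (stronglyMeasurable_zero.aestronglyMeasurable)).symm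
      have ht' : MeasurableSet t := hm'le _ ht
      have hcov : t = ⋃ s ∈ P, (t ∩ s) := by
        rw [← Set.inter_iUnion₂, hcover, Set.inter_univ]
      have hdec : ∫ x in t, Vg x ∂μ = ∑ s ∈ P, ∫ x in t ∩ s, Vg x ∂μ := by
        conv_lhs => rw [hcov]
        refine integral_biUnion_finset P (fun s hs => ht'.inter (hsm s hs)) ?_
          (fun s hs => hVgi.integrableOn)
        intro a ha b hb hab
        exact (hdisj ha hb hab).mono Set.inter_subset_right Set.inter_subset_right
      have hterm : ∀ s ∈ P, ∫ x in t ∩ s, Vg x ∂μ = 0 := by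
        intro s hs
        have h1 : ∫ x in t ∩ s, Vg x ∂μ = ∫ x in t ∩ s, Vch (R s) x ∂μ := by
          refine setIntegral_congr_fun (ht'.inter (hsm s hs)) (fun ω hω => ?_)
          simp only [hVgdef]
          rw [hatomeq s hs ω hω.2]
        have h2 : MeasurableSet[MeasurableSpace.comap W' inferInstance] (t ∩ s) :=
          MeasurableSet.inter ht (hsm' s hs)
        rw [h1, integral_restrict_indep_pi hW' hW'' hindep h2 (hVchc (R s)) (hVchi (R s)),
          hVch0 (R s), smul_zero]
      simp only [Pi.zero_apply]
      rw [integral_zero, hdec, Finset.sum_eq_zero hterm]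
    refine le_trans (iInf_le_of_le U (iInf_le_of_le Vg (iInf_le_of_le hUc (iInf_le_of_le hVgc
      (iInf_le_of_le hVgi (iInf_le_of_le hVgce le_rfl)))))) ?_
    rw [hdecomp (fun ω => φ (Y ω, U ω, Vg ω, W'' ω))]
    have hRHS : ∫⁻ ω, ψ (Y ω) ∂μ + ε = ∑ s ∈ P, (μ s * ψ (Y (R s)) + μ s * ε) := by
      rw [Finset.sum_add_distrib, ← Finset.sum_mul, hsum, one_mul]
      congr 1
      rw [hdecomp (fun ω => ψ (Y ω))]
      exact Finset.sum_congr rfl hψint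
    rw [hRHS]
    refine Finset.sum_le_sum fun s hs => ?_
    rcases eq_or_ne (μ s) 0 with hμs | hμs
    · rw [Measure.restrict_eq_zero.mpr hμs]
      simp
    · have hgg : ∀ᵐ ω ∂μ, ω ∈ s → φ (Y ω, U ω, Vg ω, W'' ω) =
          φ (Y (R s), uch (R s), Vch (R s) ω, W'' ω) := by
        refine Filter.Eventually.of_forall fun ω hω => ?_
        have hU1 : U ω = uch (R s) := by
          simp only [hUdef]
          rw [hatomeq s hs ω hω]
        have hV1 : Vg ω = Vch (R s) ω := by
          simp only [hVgdef]
          rw [hatomeq s hs ω hω]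
        rw [hU1, hV1]
        have hYM : MEq (Y ω) (Y (R s)) := MEq.of_comap_le hY (hMEqat s hs ω hω)
        exact (hYM.prod MEq.rfl).eq_of_measurable hφ
      rw [setLIntegral_congr_fun_ae (hsm s hs) hgg]
      have hVm'' : Measurable[MeasurableSpace.comap W'' inferInstance] (Vch (R s)) :=
        measurable_iff_comap_le.mpr (hVchc (R s))
      have hW''m'' : Measurable[MeasurableSpace.comap W'' inferInstance] W'' :=
        measurable_iff_comap_le.mpr le_rfl
      have hφm : Measurable (fun p : (Fin m → ℝ) × 𝕎'' => φ (Y (R s), uch (R s), p.1, p.2)) :=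
        hφ.comp (measurable_const.prodMk (measurable_const.prodMk measurable_id))
      have hZm'' : Measurable[MeasurableSpace.comap W'' inferInstance]
          (fun ω => φ (Y (R s), uch (R s), Vch (R s) ω, W'' ω)) :=
        hφm.comp (hVm''.prodMk hW''m'')
      rw [lintegral_restrict_indep hW' hW'' hindep (hsm' s hs)
        (measurable_iff_comap_le.mp hZm''), ← mul_add]
      exact mul_le_mul_right (hVchφ (R s) (hψfin s hs hμs)) _
  · -- ∫⁻ ψ ∘ Y ≤ iInf
    refine le_iInf fun U => le_iInf fun V => le_iInf fun hUc => le_iInf fun hVc =>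
      le_iInf fun hVi => le_iInf fun hVce => ?_
    rw [hdecomp (fun ω => ψ (Y ω)), hdecomp (fun ω => φ (Y ω, U ω, V ω, W'' ω))]
    refine Finset.sum_le_sum fun s hs => ?_
    rw [hψint s hs]
    rcases eq_or_ne (μ s) 0 with hμs | hμs
    · rw [hμs, zero_mul]
      exact zero_le'
    · -- build the `σ(W'')`-measurable candidate `V'` agreeing with `V` on `s`
      set val : Set Ω → (Fin m → ℝ) :=
        fun t => if h : (s ∩ t).Nonempty then V h.choose else 0 with hvaldef
      set V' : Ω → Fin m → ℝ := fun ω => val (atomOf W'' ω) with hV'def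
      have ha : ∀ ω ∈ s, V' ω = V ω := by
        intro ω hω
        have hne : (s ∩ atomOf W'' ω).Nonempty := ⟨ω, hω, self_mem_atomOf W'' ω⟩
        have hσ := hne.choose_spec
        have h1 : MEq (W' hne.choose) (W' ω) :=
          (hMEqat s hs _ hσ.1).trans (hMEqat s hs ω hω).symm
        have h2 : MEq (W'' hne.choose) (W'' ω) := mem_atomOf.mp hσ.2
        have h3 : MEq ((fun ω' => (W' ω', W'' ω')) hne.choose)
            ((fun ω' => (W' ω', W'' ω')) ω) := h1.prod h2
        have h4 : V hne.choose = V ω := (MEq.of_comap_le hVc h3).eq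
        simp only [hV'def, hvaldef]
        rw [dif_pos hne]
        exact h4
      have hb : MeasurableSpace.comap V' inferInstance ≤
          MeasurableSpace.comap W'' inferInstance := comap_comp_atomOf_le hfin'' val
      have hV'm : Measurable V' := measurable_iff_comap_le.mpr (hb.trans hW''.comap_le)
      have hV'fin : (Set.range V').Finite := by
        have hsub : Set.range V' ⊆ val '' Set.range (atomOf W'') := by
          rintro _ ⟨ω, rfl⟩
          exact ⟨atomOf W'' ω, Set.mem_range_self _, rfl⟩
        exact ((finite_range_atomOf hfin'').image val).subset hsub
      have hc : Integrable V' μ := integrable_of_finite_range hV'm hV'fin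
      have hμsR : (μ s).toReal ≠ 0 := by
        simp [ENNReal.toReal_eq_zero_iff, hμs, measure_ne_top μ s]
      have hsint : ∫ ω in s, V ω ∂μ = 0 := by
        have h1 := setIntegral_condExp hm'le hVi (hsm' s hs)
        have h2 : ∫ ω in s, (μ[V | MeasurableSpace.comap W' inferInstance]) ω ∂μ = 0 := by
          rw [integral_congr_ae (ae_restrict_of_ae hVce)]
          simp
        rw [← h1, h2]
      have hd : ∫ ω, V' ω ∂μ = 0 := by
        have hK := integral_restrict_indep_pi hW' hW'' hindep (hsm' s hs) hb hc
        have h1 : ∫ ω in s, V' ω ∂μ = ∫ ω in s, V ω ∂μ :=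
          setIntegral_congr_fun (hsm s hs) ha
        rw [h1, hsint] at hK
        rcases smul_eq_zero.mp hK.symm with h | h
        · exact absurd h hμsR
        · exact h
      have he : ψ (Y (R s)) ≤ ∫⁻ ω, φ (Y (R s), U (R s), V' ω, W'' ω) ∂μ := by
        rw [hψ (Y (R s))]
        exact iInf_le_of_le (U (R s)) (iInf_le_of_le V' (iInf_le_of_le hb (iInf_le_of_le hc
          (iInf_le_of_le hd le_rfl))))
      have hV'm'' : Measurable[MeasurableSpace.comap W'' inferInstance] V' :=
        measurable_iff_comap_le.mpr hb
      have hW''m'' : Measurable[MeasurableSpace.comap W'' inferInstance] W'' :=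
        measurable_iff_comap_le.mpr le_rfl
      have hφm : Measurable (fun p : (Fin m → ℝ) × 𝕎'' => φ (Y (R s), U (R s), p.1, p.2)) :=
        hφ.comp (measurable_const.prodMk (measurable_const.prodMk measurable_id))
      have hZm'' : Measurable[MeasurableSpace.comap W'' inferInstance]
          (fun ω => φ (Y (R s), U (R s), V' ω, W'' ω)) :=
        hφm.comp (hV'm''.prodMk hW''m'')
      have hf := lintegral_restrict_indep hW' hW'' hindep (hsm' s hs)
        (measurable_iff_comap_le.mp hZm'')
      have hgg : ∀ᵐ ω ∂μ, ω ∈ s → φ (Y (R s), U (R s), V' ω, W'' ω) =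
          φ (Y ω, U ω, V ω, W'' ω) := by
        refine Filter.Eventually.of_forall fun ω hω => ?_
        have hwM : MEq (W' (R s)) (W' ω) := (hMEqat s hs ω hω).symm
        have hYM : MEq (Y (R s)) (Y ω) := MEq.of_comap_le hY hwM
        have hUM : MEq (U (R s)) (U ω) := MEq.of_comap_le hUc hwM
        rw [ha ω hω]
        exact (hYM.prod (hUM.prod MEq.rfl)).eq_of_measurable hφ
      calc μ s * ψ (Y (R s)) ≤ μ s * ∫⁻ ω, φ (Y (R s), U (R s), V' ω, W'' ω) ∂μ :=
            mul_le_mul_right he _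
        _ = ∫⁻ ω in s, φ (Y (R s), U (R s), V' ω, W'' ω) ∂μ := hf.symm
        _ = ∫⁻ ω in s, φ (Y ω, U ω, V ω, W'' ω) ∂μ :=
            setLIntegral_congr_fun_ae (hsm s hs) hgg
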